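/- Every finite distributive lattice is ranked: for every element x, every maximal chain with greatest element x has length equal to the height of x. -/

import Mathlib

/-- The height of `x`: the supremum of the lengths (`#C - 1`) of finite chains
with greatest element `x`. -/
noncomputable def heightOf {L : Type*} [PartialOrder L] (x : L) : ℕ :=
  sSup {n | ∃ C : Finset L, IsChain (· ≤ ·) (C : Set L) ∧ x ∈ C ∧
    (∀ y ∈ C, y ≤ x) ∧ C.card - 1 = n}

section Aux

variable {L : Type*} [DistribLattice L] [Fintype L]

lemma heightSet_bdd (x : L) :
    BddAbove {n | ∃ C : Finset L, IsChain (· ≤ ·) (C : Set L) ∧ x ∈ C ∧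
      (∀ y ∈ C, y ≤ x) ∧ C.card - 1 = n} := by
  refine ⟨Fintype.card L, ?_⟩
  rintro n ⟨C, -, -, -, rfl⟩
  exact le_trans (Nat.sub_le _ _) (Finset.card_le_univ C)

lemma heightSet_nonempty (x : L) :
    ({n | ∃ C : Finset L, IsChain (· ≤ ·) (C : Set L) ∧ x ∈ C ∧
      (∀ y ∈ C, y ≤ x) ∧ C.card - 1 = n} : Set ℕ).Nonempty := by
  refine ⟨0, {x}, ?_, by simp, by simp, by simp⟩
  simp only [Finset.coe_singleton]
  exact Set.subsingleton_singleton.isChain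

lemma le_heightOf {x : L} {C : Finset L} (h1 : IsChain (· ≤ ·) (C : Set L))
    (h2 : x ∈ C) (h3 : ∀ y ∈ C, y ≤ x) : C.card - 1 ≤ heightOf x :=
  le_csSup (heightSet_bdd x) ⟨C, h1, h2, h3, rfl⟩

lemma exists_chain_heightOf (x : L) :
    ∃ C : Finset L, IsChain (· ≤ ·) (C : Set L) ∧ x ∈ C ∧
      (∀ y ∈ C, y ≤ x) ∧ C.card - 1 = heightOf x :=
  Nat.sSup_mem (heightSet_nonempty x) (heightSet_bdd x)

/-- Height strictly increases. -/
lemma heightOf_add_one_le {a b : L} (hab : a < b) : heightOf a + 1 ≤ heightOf b := by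
  classical
  obtain ⟨C, hc, haC, hle, hcard⟩ := exists_chain_heightOf a
  have hbC : b ∉ C := fun h => absurd (hle b h) (not_le_of_gt hab)
  have hchain : IsChain (· ≤ ·) ((insert b C : Finset L) : Set L) := by
    rw [Finset.coe_insert]
    exact hc.insert (fun y hy _ => Or.inr ((hle y hy).trans hab.le))
  have hle' : ∀ y ∈ insert b C, y ≤ b := by
    intro y hy
    rcases Finset.mem_insert.1 hy with rfl | hy
    · exact le_rfl
    · exact (hle y hy).trans hab.le
  have h2 := le_heightOf hchain (Finset.mem_insert_self b C) hle'
  rw [Finset.card_insert_of_notMem hbC] at h2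
  have hpos : 0 < C.card := Finset.card_pos.2 ⟨a, haC⟩
  omega

/-- Across a covering, height increases by at most one. -/
lemma heightOf_le_of_covBy {a b : L} (hab : a ⋖ b) : heightOf b ≤ heightOf a + 1 := by
  classical
  obtain ⟨C, hc, hbC, hle, hcard⟩ := exists_chain_heightOf b
  set D : Finset L := C.image (· ⊓ a) with hD
  have hchainD : IsChain (· ≤ ·) (D : Set L) := by
    rw [hD, Finset.coe_image]
    exact hc.image_of_map_rel _ _ _ (fun x y h => inf_le_inf_right a h)
  have haD : a ∈ D := Finset.mem_image.2 ⟨b, hbC, inf_eq_right.2 hab.le⟩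
  have hleD : ∀ y ∈ D, y ≤ a := by
    rintro y hy
    obtain ⟨z, -, rfl⟩ := Finset.mem_image.1 hy
    exact inf_le_right
  -- counting: the meet map is injective except possibly one fiber of size two
  have hsup : ∀ z ∈ C, ¬ z ≤ a → z ⊔ a = b := by
    intro z hz hza
    have h1 : a < z ⊔ a :=
      lt_of_le_of_ne le_sup_right (fun h => hza (le_sup_left.trans_eq h.symm))
    have h2 : z ⊔ a ≤ b := sup_le (hle z hz) hab.le
    exact h2.lt_or_eq.resolve_left (hab.2 h1)
  set C1 := C.filter (fun z => z ≤ a) with hC1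
  set C2 := C.filter (fun z => ¬ z ≤ a) with hC2
  have hunion : C1 ∪ C2 = C := Finset.filter_union_filter_not_eq _ C
  have himg1 : C1.image (· ⊓ a) = C1 := by
    rw [Finset.image_congr (g := id) ?_, Finset.image_id]
    intro y hy
    rw [hC1] at hy
    simp only [Finset.coe_filter, Set.mem_setOf_eq] at hy
    exact inf_eq_left.2 hy.2
  have hinj : Set.InjOn (· ⊓ a) ↑C2 := by
    intro z hz z' hz' hzz
    rw [hC2] at hz hz'
    simp only [Finset.coe_filter, Set.mem_setOf_eq] at hz hz'
    exact eq_of_inf_eq_sup_eq hzz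
      ((hsup z hz.1 hz.2).trans (hsup z' hz'.1 hz'.2).symm)
  have hDeq : D = C1 ∪ C2.image (· ⊓ a) := by
    rw [hD, ← hunion, Finset.image_union, himg1]
  -- the overlap has at most one element
  have hover : (C1 ∩ C2.image (· ⊓ a)).card ≤ 1 := by
    rw [Finset.card_le_one]
    have key : ∀ y ∈ C1 ∩ C2.image (· ⊓ a), ∀ y' ∈ C1 ∩ C2.image (· ⊓ a), y ≤ y' := by
      intro y hy y' hy'
      obtain ⟨hy1, hy2⟩ := Finset.mem_inter.1 hy
      obtain ⟨hy1', hy2'⟩ := Finset.mem_inter.1 hy'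
      obtain ⟨z', hz', rfl⟩ := Finset.mem_image.1 hy2'
      have hyC : y ∈ C := Finset.mem_of_mem_filter y hy1
      have hya : y ≤ a := (Finset.mem_filter.1 hy1).2
      have hz'C : z' ∈ C := Finset.mem_of_mem_filter z' hz'
      have hz'a : ¬ z' ≤ a := (Finset.mem_filter.1 hz').2
      have hyz : y ≤ z' := by
        rcases eq_or_ne y z' with rfl | hne
        · exact le_rfl
        · rcases hc hyC hz'C hne with h | h
          · exact h
          · exact absurd (h.trans hya) hz'a
      exact le_inf hyz hya
    exact fun y hy y' hy' => le_antisymm (key y hy y' hy') (key y' hy' y hy)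
  have hcount : C.card ≤ D.card + 1 := by
    have h1 := Finset.card_union_add_card_inter C1 (C2.image (· ⊓ a))
    have h2 : (C2.image (· ⊓ a)).card = C2.card := Finset.card_image_of_injOn hinj
    have h3 : C1.card + C2.card = C.card := by
      rw [← Finset.card_union_of_disjoint (Finset.disjoint_filter_filter_not C C _), hunion]
    rw [← hDeq] at h1
    omega
  have hfin := le_heightOf hchainD haD hleD
  have hpos : 0 < C.card := Finset.card_pos.2 ⟨b, hbC⟩
  omega

lemma ranked_aux (n : ℕ) : ∀ (x : L) (C : Finset L), C.card = n →
    IsChain (· ≤ ·) (C : Set L) → x ∈ C → (∀ y ∈ C, y ≤ x) →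
    (∀ D : Finset L, IsChain (· ≤ ·) (D : Set L) → x ∈ D →
      (∀ y ∈ D, y ≤ x) → C ⊆ D → C = D) →
    C.card - 1 = heightOf x := by
  induction n with
  | zero =>
    intro x C hn _ hxC _ _
    exact absurd (Finset.card_pos.2 ⟨x, hxC⟩) (by omega)
  | succ n ih =>
    intro x C hn hchain hxC hgreatest hmax
    classical
    rcases Nat.eq_zero_or_pos n with rfl | hnpos
    · -- `C = {x}` and `x` is minimal
      have hCx : C = {x} := by
        obtain ⟨y, hy⟩ := Finset.card_eq_one.1 hn
        subst hy
        rw [Finset.mem_singleton] at hxC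
        subst hxC; rfl
      subst hCx
      have hmin : ∀ y : L, ¬ y < x := by
        intro y hy
        have hyx : y ∉ ({x} : Finset L) := by simp [hy.ne]
        have hch : IsChain (· ≤ ·) ((insert y {x} : Finset L) : Set L) := by
          rw [Finset.coe_insert]
          refine hchain.insert fun z hz _ => Or.inl ?_
          rw [Finset.coe_singleton, Set.mem_singleton_iff] at hz
          exact hz ▸ hy.le
        have heq := hmax (insert y {x}) hch (by simp)
          (fun z hz => by
            rcases Finset.mem_insert.1 hz with rfl | hz
            · exact hy.le
            · exact le_of_eq (Finset.mem_singleton.1 hz))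
          (Finset.subset_insert y {x})
        exact hyx (heq ▸ Finset.mem_insert_self y {x})
      obtain ⟨D, hD, hxD, hleD, hDcard⟩ := exists_chain_heightOf x
      have hDx : D = {x} := by
        refine Finset.eq_singleton_iff_unique_mem.2 ⟨hxD, fun y hy => ?_⟩
        rcases eq_or_ne y x with rfl | hney
        · rfl
        · exact absurd (lt_of_le_of_ne (hleD y hy) hney) (hmin y)
      rw [hDx] at hDcard
      exact hDcard
    · -- remove the top element
      have herase_card : (C.erase x).card = n := by
        rw [Finset.card_erase_of_mem hxC, hn]
        omega
      have hne : (C.erase x).Nonempty := Finset.card_pos.1 (by omega)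
      obtain ⟨x', hx'mem, hx'max⟩ := Set.Finite.exists_maximalFor id
        (↑(C.erase x) : Set L) (Set.toFinite _) (by exact_mod_cast hne)
      rw [Finset.mem_coe] at hx'mem
      have hx'C : x' ∈ C := Finset.mem_of_mem_erase hx'mem
      have hx'ne : x' ≠ x := Finset.ne_of_mem_erase hx'mem
      have hx'lt : x' < x := lt_of_le_of_ne (hgreatest x' hx'C) hx'ne
      have hje : ∀ y ∈ C.erase x, y ≤ x' := by
        intro y hy
        rcases eq_or_ne y x' with rfl | hne2
        · exact le_rfl
        · rcases hchain (Finset.mem_coe.2 (Finset.mem_of_mem_erase hy))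
            (Finset.mem_coe.2 hx'C) hne2 with h | h
          · exact h
          · exact hx'max (Finset.mem_coe.2 hy) h
      have hcov : x' ⋖ x := by
        refine ⟨hx'lt, fun w hw1 hw2 => ?_⟩
        have hwC : w ∉ C := by
          intro hwC
          rcases eq_or_ne w x with rfl | hnew
          · exact lt_irrefl _ hw2
          · exact absurd (hje w (Finset.mem_erase.2 ⟨hnew, hwC⟩)) (not_le_of_gt hw1)
        have hch : IsChain (· ≤ ·) ((insert w C : Finset L) : Set L) := by
          rw [Finset.coe_insert]
          refine hchain.insert fun z hz _ => ?_
          rw [Finset.mem_coe] at hz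
          rcases eq_or_ne z x with rfl | hnez
          · exact Or.inl hw2.le
          · exact Or.inr ((hje z (Finset.mem_erase.2 ⟨hnez, hz⟩)).trans hw1.le)
        have heq := hmax (insert w C) hch (Finset.mem_insert_of_mem hxC)
          (fun z hz => by
            rcases Finset.mem_insert.1 hz with rfl | hz
            · exact hw2.le
            · exact hgreatest z hz)
          (Finset.subset_insert w C)
        exact hwC (heq ▸ Finset.mem_insert_self w C)
      have hmax' : ∀ D : Finset L, IsChain (· ≤ ·) (D : Set L) → x' ∈ D →
          (∀ y ∈ D, y ≤ x') → C.erase x ⊆ D → C.erase x = D := by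
        intro D hD hx'D hleD hsub
        have hxD : x ∉ D := fun h => absurd (hleD x h) (not_le_of_gt hx'lt)
        have hch : IsChain (· ≤ ·) ((insert x D : Finset L) : Set L) := by
          rw [Finset.coe_insert]
          exact hD.insert fun z hz _ =>
            Or.inr ((hleD z (Finset.mem_coe.1 hz)).trans hx'lt.le)
        have hsub2 : C ⊆ insert x D := by
          intro z hz
          rcases eq_or_ne z x with rfl | hnez
          · exact Finset.mem_insert_self _ _
          · exact Finset.mem_insert_of_mem (hsub (Finset.mem_erase.2 ⟨hnez, hz⟩))
        have heq := hmax (insert x D) hch (Finset.mem_insert_self _ _)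
          (fun z hz => by
            rcases Finset.mem_insert.1 hz with rfl | hz
            · exact le_rfl
            · exact (hleD z hz).trans hx'lt.le) hsub2
        refine Finset.Subset.antisymm hsub fun z hz => ?_
        have hzC : z ∈ C := heq ▸ Finset.mem_insert_of_mem hz
        exact Finset.mem_erase.2 ⟨fun h => hxD (h ▸ hz), hzC⟩
      have ih' := ih x' (C.erase x) herase_card
        (hchain.mono (Finset.coe_subset.2 (Finset.erase_subset x C)))
        hx'mem hje hmax'
      have hh : heightOf x = heightOf x' + 1 :=
        le_antisymm (heightOf_le_of_covBy hcov) (heightOf_add_one_le hx'lt)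
      rw [herase_card] at ih'
      omega

end Aux

/-- Every finite distributive lattice is ranked: for every element `x`, every
maximal chain with greatest element `x` has length equal to the height of `x`. -/
theorem finite_distrib_lattice_ranked {L : Type*} [DistribLattice L] [Fintype L]
    (x : L) (C : Finset L) (hchain : IsChain (· ≤ ·) (C : Set L))
    (hxC : x ∈ C) (hgreatest : ∀ y ∈ C, y ≤ x)
    (hmax : ∀ D : Finset L, IsChain (· ≤ ·) (D : Set L) → x ∈ D →
      (∀ y ∈ D, y ≤ x) → C ⊆ D → C = D) :
    C.card - 1 = heightOf x :=
  ranked_aux C.card x C rfl hchain hxC hgreatest hmax
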